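/- Every coefficient of ∏_{n≥0}(1 + q^{4n+1} + q^{2(4n+1)}) / (q^2;q^4)_∞ - ∏_{n≥0}(1 + q^{4n+3} + q^{2(4n+3)}) / (q^2;q^4)_∞ is nonnegative. -/
import Mathlib

open Multiset

private def fimg (i : ℕ) : Multiset ℕ := if i % 4 = 3 then {i - 2, 2} else {i}

private def Bm (s : Multiset ℕ) : Multiset ℕ := s.bind fimg

private lemma Bm_cons (a : ℕ) (s : Multiset ℕ) : Bm (a ::ₘ s) = fimg a + Bm s := by
  simp [Bm]

private lemma fimg_sum (a : ℕ) : (fimg a).sum = a := by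
  unfold fimg
  split
  · next h => simp; omega
  · simp

private lemma Bm_sum (s : Multiset ℕ) : (Bm s).sum = s.sum := by
  induction s using Multiset.induction with
  | empty => simp [Bm]
  | cons a s ih => simp [Bm_cons, fimg_sum, ih]

private lemma Bm_pos (s : Multiset ℕ) (hs : ∀ a ∈ s, 0 < a) :
    ∀ j ∈ Bm s, 0 < j := by
  intro j hj
  rw [Bm, Multiset.mem_bind] at hj
  obtain ⟨a, ha, hja⟩ := hj
  have := hs a ha
  unfold fimg at hja
  split at hja
  · next h =>
    simp only [Multiset.insert_eq_cons, Multiset.mem_cons, Multiset.mem_singleton] at hja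
    rcases hja with rfl | rfl <;> omega
  · simp only [Multiset.mem_singleton] at hja; omega

private lemma Bm_mod (s : Multiset ℕ) (hs : ∀ a ∈ s, a % 4 = 3 ∨ a % 4 = 2) :
    ∀ j ∈ Bm s, j % 4 = 1 ∨ j % 4 = 2 := by
  intro j hj
  rw [Bm, Multiset.mem_bind] at hj
  obtain ⟨a, ha, hja⟩ := hj
  have := hs a ha
  unfold fimg at hja
  split at hja
  · next h =>
    simp only [Multiset.insert_eq_cons, Multiset.mem_cons, Multiset.mem_singleton] at hja
    rcases hja with rfl | rfl <;> omega
  · next h =>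
    simp only [Multiset.mem_singleton] at hja
    subst hja; omega

private lemma count1 (s : Multiset ℕ) (hs : ∀ a ∈ s, a % 4 ≠ 1) (j : ℕ) (hj : j % 4 = 1) :
    (Bm s).count j = s.count (j + 2) := by
  induction s using Multiset.induction with
  | empty => simp [Bm]
  | cons a s ih =>
    have ha := hs a (Multiset.mem_cons_self a s)
    rw [Bm_cons, Multiset.count_add, Multiset.count_cons,
      ih (fun x hx => hs x (Multiset.mem_cons_of_mem hx))]
    have hf : (fimg a).count j = if j + 2 = a then 1 else 0 := by
      by_cases h : a % 4 = 3 <;>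
        simp only [fimg, if_pos, if_neg, h, Multiset.insert_eq_cons, Multiset.count_cons,
          Multiset.count_singleton, if_true, if_false] <;>
        split_ifs <;> omega
    rw [hf]
    split_ifs <;> omega

private lemma count2 (s : Multiset ℕ) (j : ℕ) (hj : j % 4 = 2) (hj2 : j ≠ 2) :
    (Bm s).count j = s.count j := by
  induction s using Multiset.induction with
  | empty => simp [Bm]
  | cons a s ih =>
    rw [Bm_cons, Multiset.count_add, Multiset.count_cons, ih]
    have hf : (fimg a).count j = if j = a then 1 else 0 := by
      by_cases h : a % 4 = 3 <;>
        simp only [fimg, if_pos, if_neg, h, Multiset.insert_eq_cons, Multiset.count_cons,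
          Multiset.count_singleton, if_true, if_false] <;>
        split_ifs <;> omega
    rw [hf]
    split_ifs <;> omega

private lemma count_two (s : Multiset ℕ) :
    (Bm s).count 2 = s.count 2 + (s.filter (fun a => a % 4 = 3)).card := by
  induction s using Multiset.induction with
  | empty => simp [Bm]
  | cons a s ih =>
    rw [Bm_cons, Multiset.count_add, Multiset.count_cons, ih, Multiset.filter_cons]
    have hf : (fimg a).count 2 = if a % 4 = 3 then 1 else if 2 = a then 1 else 0 := by
      by_cases h : a % 4 = 3 <;>
        simp only [fimg, if_pos, if_neg, h, Multiset.insert_eq_cons, Multiset.count_cons,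
          Multiset.count_singleton, if_true, if_false] <;>
        split_ifs <;> omega
    rw [hf]
    by_cases h : a % 4 = 3
    · simp only [if_pos h]
      rw [Multiset.card_add, Multiset.card_singleton]
      have : ¬ ((2:ℕ) = a) := by omega
      split_ifs <;> omega
    · simp only [if_neg h]
      rw [Multiset.card_add, Multiset.card_zero]
      split_ifs <;> omega

private lemma card_one (s : Multiset ℕ) (hs : ∀ a ∈ s, a % 4 ≠ 1) :
    ((Bm s).filter (fun j => j % 4 = 1)).card = (s.filter (fun a => a % 4 = 3)).card := by
  induction s using Multiset.induction with
  | empty => simp [Bm]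
  | cons a s ih =>
    have ha := hs a (Multiset.mem_cons_self a s)
    rw [Bm_cons, Multiset.filter_add, Multiset.card_add,
      ih (fun x hx => hs x (Multiset.mem_cons_of_mem hx)), Multiset.filter_cons]
    have hf : ((fimg a).filter (fun j => j % 4 = 1)).card = if a % 4 = 3 then 1 else 0 := by
      by_cases h : a % 4 = 3
      · have h1 : (a - 2) % 4 = 1 := by omega
        simp [fimg, h, Multiset.filter_cons, h1, Multiset.filter_singleton]
      · simp [fimg, h, Multiset.filter_singleton, ha]
    rw [hf]
    by_cases h : a % 4 = 3
    · simp only [if_pos h, Multiset.card_add, Multiset.card_singleton]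
    · simp only [if_neg h, Multiset.card_add, Multiset.card_zero]

private lemma Bm_inj (s₁ s₂ : Multiset ℕ)
    (h₁ : ∀ a ∈ s₁, a % 4 = 3 ∨ a % 4 = 2) (h₂ : ∀ a ∈ s₂, a % 4 = 3 ∨ a % 4 = 2)
    (h : Bm s₁ = Bm s₂) : s₁ = s₂ := by
  have h₁' : ∀ a ∈ s₁, a % 4 ≠ 1 := fun a ha => by have := h₁ a ha; omega
  have h₂' : ∀ a ∈ s₂, a % 4 ≠ 1 := fun a ha => by have := h₂ a ha; omega
  ext j
  by_cases hj3 : j % 4 = 3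
  · have e1 := count1 s₁ h₁' (j - 2) (by omega)
    have e2 := count1 s₂ h₂' (j - 2) (by omega)
    have hjj : j - 2 + 2 = j := by omega
    rw [hjj] at e1 e2
    rw [← e1, ← e2, h]
  by_cases hj2 : j % 4 = 2
  · by_cases hjj : j = 2
    · subst hjj
      have e1 := count_two s₁
      have e2 := count_two s₂
      have ec := card_one s₁ h₁'
      have ec2 := card_one s₂ h₂'
      rw [h] at e1 ec
      omega
    · rw [← count2 s₁ j hj2 hjj, ← count2 s₂ j hj2 hjj, h]
  · have e1 : j ∉ s₁ := fun hj => by have := h₁ j hj; omega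
    have e2 : j ∉ s₂ := fun hj => by have := h₂ j hj; omega
    rw [Multiset.count_eq_zero_of_notMem e1, Multiset.count_eq_zero_of_notMem e2]

private def toGood (n : ℕ)
    (p : {p : n.Partition //
        (∀ i ∈ p.parts, i % 4 = 3 ∨ i % 4 = 2) ∧
        ∀ i ∈ p.parts, i % 4 = 3 → p.parts.count i ≤ 2}) :
    {p : n.Partition //
        (∀ i ∈ p.parts, i % 4 = 1 ∨ i % 4 = 2) ∧
        ∀ i ∈ p.parts, i % 4 = 1 → p.parts.count i ≤ 2} :=
  ⟨⟨Bm p.val.parts,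
    fun {i} hi => Bm_pos p.val.parts (fun a ha => p.val.parts_pos ha) i hi,
    by rw [Bm_sum]; exact p.val.parts_sum⟩,
   Bm_mod p.val.parts p.prop.1,
   fun j hj hj1 => by
     have h' : ∀ a ∈ p.val.parts, a % 4 ≠ 1 := fun a ha => by have := p.prop.1 a ha; omega
     show (Bm p.val.parts).count j ≤ 2
     rw [count1 _ h' j hj1]
     by_cases hm : (j + 2) ∈ p.val.parts
     · exact p.prop.2 (j + 2) hm (by omega)
     · rw [Multiset.count_eq_zero_of_notMem hm]; omega⟩

private lemma toGood_inj (n : ℕ) : Function.Injective (toGood n) := by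
  intro p₁ p₂ h
  have hB : Bm p₁.val.parts = Bm p₂.val.parts :=
    congrArg (fun q => q.val.parts) h
  have := Bm_inj p₁.val.parts p₂.val.parts p₁.prop.1 p₂.prop.1 hB
  exact Subtype.ext (Nat.Partition.ext this)

theorem stmt_17 (n : ℕ) :
    Nat.card {p : n.Partition //
        (∀ i ∈ p.parts, i % 4 = 1 ∨ i % 4 = 2) ∧
        ∀ i ∈ p.parts, i % 4 = 1 → p.parts.count i ≤ 2} ≥
      Nat.card {p : n.Partition //
        (∀ i ∈ p.parts, i % 4 = 3 ∨ i % 4 = 2) ∧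
        ∀ i ∈ p.parts, i % 4 = 3 → p.parts.count i ≤ 2} := by
  exact Nat.card_le_card_of_injective (toGood n) (toGood_inj n)
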